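/- Suppose each f_i is convex and θ̃ = (1/T) Σ_{θ^{(τ)} ∈ P} γ_τ θ^{(τ)} where P is the set of Pareto-nondominated iterates among θ^{(1)},...,θ^{(T)}, and the weights γ_τ are formed by giving each iterate unit weight and reallocating the unit weight of every dominated iterate among nondominated iterates that dominate it (so Σ γ_τ = T). Then for any λ, w ∈ Δ_m, L(θ̃, λ; w) ≤ (1/T) Σ_{t=1}^T L(θ^{(t)}, λ; w). -/

import Mathlib

/-- The adaptive online-to-batch conversion output `θ̃` satisfies
`L(θ̃, λ; w) ≤ (1/T) Σ_t L(θ^{(t)}, λ; w)`. -/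
theorem adaptive_conversion_bound (d m T : ℕ) (hT : 0 < T)
    (f : Fin m → (Fin d → ℝ) → ℝ)
    (hconv : ∀ i, ConvexOn ℝ Set.univ (f i))
    (θ : Fin T → (Fin d → ℝ))
    (P : Finset (Fin T))
    (hP : ∀ t, t ∈ P ↔
      ¬ ∃ s, (∀ i, f i (θ s) ≤ f i (θ t)) ∧ ∃ j, f j (θ s) < f j (θ t))
    (β : Fin T → Fin T → ℝ)
    (hβnonneg : ∀ t τ, 0 ≤ β t τ)
    (hβsupp : ∀ t ∉ P, ∀ τ, β t τ ≠ 0 → τ ∈ P ∧ ∀ i, f i (θ τ) ≤ f i (θ t))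
    (hβsum : ∀ t ∉ P, ∑ τ, β t τ = 1)
    (γ : Fin T → ℝ)
    (hγ : ∀ τ ∈ P, γ τ = 1 + ∑ t ∈ Pᶜ, β t τ)
    (lam w : Fin m → ℝ)
    (hlam : lam ∈ stdSimplex ℝ (Fin m)) (hw : w ∈ stdSimplex ℝ (Fin m)) :
    ∑ i, lam i * (w i * f i ((T : ℝ)⁻¹ • ∑ τ ∈ P, γ τ • θ τ))
      ≤ (T : ℝ)⁻¹ * ∑ t, ∑ i, lam i * (w i * f i (θ t)) := by
  classical
  have hTpos : (0:ℝ) < T := by exact_mod_cast hT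
  set g : Fin T → ℝ := fun t => ∑ i, lam i * (w i * f i (θ t)) with hgdef
  have hcoef : ∀ i, 0 ≤ lam i * w i := fun i => mul_nonneg (hlam.1 i) (hw.1 i)
  -- restricted β sums
  have hβrestrict : ∀ t ∉ P, ∑ τ ∈ P, β t τ = 1 := by
    intro t ht
    rw [← hβsum t ht]
    refine Finset.sum_subset (Finset.subset_univ _) ?_
    intro τ _ hτ
    by_contra h
    exact hτ ((hβsupp t ht τ h).1)
  -- total weight
  have hγsum : ∑ τ ∈ P, γ τ = (T : ℝ) := by
    rw [Finset.sum_congr rfl (fun τ hτ => hγ τ hτ), Finset.sum_add_distrib,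
      Finset.sum_comm]
    have h1 : ∑ t ∈ Pᶜ, ∑ τ ∈ P, β t τ = ∑ t ∈ Pᶜ, (1:ℝ) := by
      refine Finset.sum_congr rfl fun t ht => hβrestrict t (Finset.mem_compl.mp ht)
    rw [h1]
    simp only [Finset.sum_const, nsmul_eq_mul, mul_one]
    have hcard : (P.card : ℝ) + (Pᶜ.card : ℝ) = (T : ℝ) := by
      have := Finset.card_add_card_compl P
      simp only [Fintype.card_fin] at this
      exact_mod_cast this
    simpa using hcard
  have hγnonneg : ∀ τ ∈ P, 0 ≤ γ τ := by
    intro τ hτ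
    rw [hγ τ hτ]
    have : 0 ≤ ∑ t ∈ Pᶜ, β t τ := Finset.sum_nonneg fun t _ => hβnonneg t τ
    linarith
  -- Jensen weights
  set c : Fin T → ℝ := fun τ => (T : ℝ)⁻¹ * γ τ with hcdef
  have hcnonneg : ∀ τ ∈ P, 0 ≤ c τ :=
    fun τ hτ => mul_nonneg (inv_nonneg.mpr hTpos.le) (hγnonneg τ hτ)
  have hcsum : ∑ τ ∈ P, c τ = 1 := by
    rw [hcdef]
    simp only [← Finset.mul_sum, hγsum]
    field_simp
  have hpt : (T : ℝ)⁻¹ • ∑ τ ∈ P, γ τ • θ τ = ∑ τ ∈ P, c τ • θ τ := by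
    rw [Finset.smul_sum]
    exact Finset.sum_congr rfl fun τ _ => by rw [smul_smul]
  -- Jensen for each i
  have hjensen : ∀ i, f i ((T : ℝ)⁻¹ • ∑ τ ∈ P, γ τ • θ τ)
      ≤ ∑ τ ∈ P, c τ * f i (θ τ) := by
    intro i
    rw [hpt]
    exact (hconv i).map_sum_le hcnonneg hcsum (fun τ _ => Set.mem_univ _)
  -- g monotone under domination
  have hgle : ∀ t ∉ P, ∀ τ, β t τ ≠ 0 → g τ ≤ g t := by
    intro t ht τ hβ
    refine Finset.sum_le_sum fun i _ => ?_
    have := (hβsupp t ht τ hβ).2 i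
    have := hcoef i
    nlinarith
  -- key inequality
  have hkey : ∑ τ ∈ P, γ τ * g τ ≤ ∑ t, g t := by
    calc ∑ τ ∈ P, γ τ * g τ
        = ∑ τ ∈ P, (g τ + ∑ t ∈ Pᶜ, β t τ * g τ) := by
          refine Finset.sum_congr rfl fun τ hτ => ?_
          rw [hγ τ hτ, add_mul, one_mul, Finset.sum_mul]
      _ = ∑ τ ∈ P, g τ + ∑ t ∈ Pᶜ, ∑ τ ∈ P, β t τ * g τ := by
          rw [Finset.sum_add_distrib]
          congr 1
          exact Finset.sum_comm
      _ ≤ ∑ τ ∈ P, g τ + ∑ t ∈ Pᶜ, ∑ τ ∈ P, β t τ * g t := by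
          refine add_le_add le_rfl (Finset.sum_le_sum fun t ht =>
            Finset.sum_le_sum fun τ hτ => ?_)
          by_cases hb : β t τ = 0
          · simp [hb]
          · exact mul_le_mul_of_nonneg_left
              (hgle t (Finset.mem_compl.mp ht) τ hb) (hβnonneg t τ)
      _ = ∑ τ ∈ P, g τ + ∑ t ∈ Pᶜ, g t := by
          refine congrArg _ (Finset.sum_congr rfl fun t ht => ?_)
          rw [← Finset.sum_mul, hβrestrict t (Finset.mem_compl.mp ht), one_mul]
      _ = ∑ t, g t := Finset.sum_add_sum_compl P g
  -- assemble
  calc ∑ i, lam i * (w i * f i ((T : ℝ)⁻¹ • ∑ τ ∈ P, γ τ • θ τ))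
      ≤ ∑ i, lam i * (w i * ∑ τ ∈ P, c τ * f i (θ τ)) := by
        refine Finset.sum_le_sum fun i _ => ?_
        have h := hjensen i
        have := hcoef i
        nlinarith
    _ = ∑ i, ∑ τ ∈ P, lam i * (w i * (c τ * f i (θ τ))) := by
        refine Finset.sum_congr rfl fun i _ => ?_
        rw [Finset.mul_sum, Finset.mul_sum]
    _ = ∑ τ ∈ P, ∑ i, lam i * (w i * (c τ * f i (θ τ))) := Finset.sum_comm
    _ = ∑ τ ∈ P, c τ * g τ := by
        refine Finset.sum_congr rfl fun τ _ => ?_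
        rw [hgdef, Finset.mul_sum]
        exact Finset.sum_congr rfl fun i _ => by ring
    _ = (T : ℝ)⁻¹ * ∑ τ ∈ P, γ τ * g τ := by
        rw [Finset.mul_sum]
        exact Finset.sum_congr rfl fun τ _ => by rw [hcdef]; ring
    _ ≤ (T : ℝ)⁻¹ * ∑ t, g t := by
        exact mul_le_mul_of_nonneg_left hkey (inv_nonneg.mpr hTpos.le)
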